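/- In any optimal linear arrangement φ* of a tree T on n ≥ 2 vertices, the vertex labeled 1 and the vertex labeled n are both leaves of T (vertices of degree 1). -/

import Mathlib

open Finset SimpleGraph
open scoped Classical

variable {V : Type*}

/-- The linear arrangement cost of a layout `φ` of a graph `G`. -/
noncomputable def layoutCost [Fintype V] (G : SimpleGraph V)
    (φ : V ≃ Fin (Fintype.card V)) : ℕ :=
  ∑ e ∈ G.edgeFinset,
    Sym2.lift ⟨fun u v => (((φ u : ℕ) : ℤ) - ((φ v : ℕ) : ℤ)).natAbs,
      fun u v => by simp only []; omega⟩ e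

/-- `φ` is an optimal linear arrangement of `G`. -/
def IsOLA [Fintype V] (G : SimpleGraph V) (φ : V ≃ Fin (Fintype.card V)) : Prop :=
  ∀ ψ : V ≃ Fin (Fintype.card V), layoutCost G φ ≤ layoutCost G ψ

/-- The optimal linear arrangement cost of `G`. -/
noncomputable def olaCost [Fintype V] (G : SimpleGraph V) : ℕ :=
  sInf (Set.range (layoutCost G))

/-- Deleting a vertex: keep the vertex type, remove all incident edges. -/
def deleteVertex (G : SimpleGraph V) (w : V) : SimpleGraph V where
  Adj x y := G.Adj x y ∧ x ≠ w ∧ y ≠ w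
  symm := ⟨fun x y h => ⟨h.1.symm, h.2.2, h.2.1⟩⟩
  loopless := ⟨fun x h => G.ne_of_adj h.1 rfl⟩

/-- A Halin graph decomposition `H = T ⊎ C`. -/
structure IsHalin [Fintype V] (T C : SimpleGraph V) : Prop where
  tree : T.IsTree
  nonleaf_deg : ∀ v : V, T.degree v ≠ 1 → 3 ≤ T.degree v
  edge_disjoint : Disjoint T.edgeSet C.edgeSet
  cycle_support : ∀ v : V, v ∈ C.support ↔ T.degree v = 1
  cycle_degree : ∀ v ∈ C.support, C.degree v = 2
  cycle_connected : ∀ u v : V, u ∈ C.support → v ∈ C.support → C.Reachable u v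
  three_paths : ∀ u v : V, u ≠ v → ∃ p q r : (T ⊔ C).Walk u v,
    p.IsPath ∧ q.IsPath ∧ r.IsPath ∧
    (∀ e ∈ p.edges, e ∉ q.edges) ∧ (∀ e ∈ p.edges, e ∉ r.edges) ∧
    (∀ e ∈ q.edges, e ∉ r.edges) ∧
    (∀ e ∈ p.edges, e ∈ T.edgeSet) ∧
    ¬ (∀ e ∈ q.edges, e ∈ T.edgeSet) ∧ ¬ (∀ e ∈ r.edges, e ∈ T.edgeSet)

/-- The subtree hanging at `c` after removing vertex `v`. -/
def subtreeAt (T : SimpleGraph V) (v c : V) : Set V :=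
  {x | (deleteVertex T v).Reachable x c}

/-- A rooted tree is recursively balanced. -/
def IsRecBalanced (T : SimpleGraph V) (r : V) : Prop :=
  ∀ v c c' : V, T.Adj v c → T.Adj v c' →
    T.dist r c = T.dist r v + 1 → T.dist r c' = T.dist r v + 1 →
    Nat.card (subtreeAt T v c) = Nat.card (subtreeAt T v c')

/-- `r` is a central vertex of `T`. -/
def IsCentral [Fintype V] (T : SimpleGraph V) (r : V) : Prop :=
  ∀ u : V, u ≠ r → Nat.card (subtreeAt T r u) ≤ Fintype.card V / 2



lemma vertex_mem_support_walk_deleteVertex {T : SimpleGraph V} {v a b : V}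
    (w : (deleteVertex T v).Walk a b) (h : v ∈ w.support) : v = a := by
  induction w with
  | nil => simpa using h
  | cons hadj p ih =>
    rw [SimpleGraph.Walk.support_cons] at h
    rcases List.mem_cons.mp h with h | h
    · exact h
    · exact absurd (ih h).symm (show T.Adj _ _ ∧ _ ∧ _ from hadj).2.2

lemma no_two_connections {T : SimpleGraph V} (hT : T.IsTree) {v x w' : V}
    (hvx : T.Adj v x) (hvw : T.Adj v w') (hxw : x ≠ w')
    (hr : (deleteVertex T v).Reachable x w') : False := by
  obtain ⟨q0⟩ := hr
  have hp : (q0.toPath : (deleteVertex T v).Walk x w').IsPath := q0.toPath.2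
  set p : (deleteVertex T v).Walk x w' := (↑q0.toPath : (deleteVertex T v).Walk x w') with hpdef
  have hedges : ∀ e ∈ p.edges, e ∈ T.edgeSet := by
    intro e he
    induction e using Sym2.ind with
    | _ a b =>
      have h2 := SimpleGraph.Walk.edges_subset_edgeSet _ he
      rw [SimpleGraph.mem_edgeSet] at h2 ⊢
      exact (show T.Adj a b ∧ _ from h2).1
  have hvsup : v ∉ (p.transfer T hedges).support := by
    rw [SimpleGraph.Walk.support_transfer]
    intro hmem
    exact hvx.ne (vertex_mem_support_walk_deleteVertex p hmem)
  have hq1 : (SimpleGraph.Walk.cons hvx (p.transfer T hedges)).IsPath := by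
    rw [SimpleGraph.Walk.cons_isPath_iff]
    exact ⟨hp.transfer hedges, hvsup⟩
  have hq2 : (SimpleGraph.Walk.cons hvw SimpleGraph.Walk.nil).IsPath := by
    simp [SimpleGraph.Walk.cons_isPath_iff]; exact hvw.ne
  obtain ⟨r, -, hr2⟩ := hT.existsUnique_path v w'
  have heq := (hr2 _ hq1).trans (hr2 _ hq2).symm
  have hlen := congrArg SimpleGraph.Walk.length heq
  simp [SimpleGraph.Walk.length_cons, SimpleGraph.Walk.length_transfer] at hlen
  exact hxw (SimpleGraph.Walk.Nil.eq hlen)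
/-- new layout: S first (reversed order), then the rest (same order). -/
noncomputable def newPos [Fintype V] (φ : V ≃ Fin (Fintype.card V)) (S : Set V) (x : V) : ℕ :=
  if x ∈ S then (univ.filter fun s => s ∈ S ∧ (φ x : ℕ) < (φ s : ℕ)).card
  else (univ.filter fun s => s ∈ S).card
    + (univ.filter fun t => t ∉ S ∧ (φ t : ℕ) < (φ x : ℕ)).card

lemma newPos_lt_c1_of_mem [Fintype V] {φ : V ≃ Fin (Fintype.card V)} {S : Set V} {x : V}
    (hx : x ∈ S) : newPos φ S x < (univ.filter fun s : V => s ∈ S).card := by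
  rw [newPos, if_pos hx]
  apply Finset.card_lt_card
  rw [Finset.ssubset_iff_of_subset (Finset.monotone_filter_right univ (fun a _ h => h.1))]
  exact ⟨x, by simp [hx], by simp⟩

lemma le_newPos_of_not_mem [Fintype V] {φ : V ≃ Fin (Fintype.card V)} {S : Set V} {x : V}
    (hx : x ∉ S) : (univ.filter fun s : V => s ∈ S).card ≤ newPos φ S x := by
  rw [newPos, if_neg hx]; exact Nat.le_add_right _ _

lemma newPos_lt_card [Fintype V] (φ : V ≃ Fin (Fintype.card V)) (S : Set V) (x : V) :
    newPos φ S x < Fintype.card V := by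
  have hsplit := Finset.card_filter_add_card_filter_not
    (s := (univ : Finset V)) (p := fun s => s ∈ S)
  rw [Finset.card_univ] at hsplit
  by_cases hx : x ∈ S
  · have := newPos_lt_c1_of_mem (φ := φ) hx
    omega
  · rw [newPos, if_neg hx]
    have hlt : (univ.filter fun t : V => t ∉ S ∧ (φ t : ℕ) < (φ x : ℕ)).card
        < (univ.filter fun t : V => ¬ t ∈ S).card := by
      apply Finset.card_lt_card
      rw [Finset.ssubset_iff_of_subset (Finset.monotone_filter_right univ (fun a _ h => h.1))]
      exact ⟨x, by simp [hx], by simp⟩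
    omega

lemma newPos_lt_of_mem_S [Fintype V] {φ : V ≃ Fin (Fintype.card V)} {S : Set V} {x z : V}
    (hx : x ∈ S) (hz : z ∈ S) (h : (φ x : ℕ) < (φ z : ℕ)) :
    newPos φ S z < newPos φ S x := by
  simp only [newPos]; rw [if_pos hx, if_pos hz]
  apply Finset.card_lt_card
  rw [Finset.ssubset_iff_of_subset
    (Finset.monotone_filter_right univ (fun a _ ha => ⟨ha.1, h.trans ha.2⟩))]
  exact ⟨z, by simp only [Finset.mem_filter, Finset.mem_univ, true_and]; exact ⟨hz, h⟩, by simp⟩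

lemma newPos_lt_of_not_mem [Fintype V] {φ : V ≃ Fin (Fintype.card V)} {S : Set V} {x z : V}
    (hx : x ∉ S) (hz : z ∉ S) (h : (φ x : ℕ) < (φ z : ℕ)) :
    newPos φ S x < newPos φ S z := by
  simp only [newPos]; rw [if_neg hx, if_neg hz]
  have : (univ.filter fun t : V => t ∉ S ∧ (φ t : ℕ) < (φ x : ℕ)).card
      < (univ.filter fun t : V => t ∉ S ∧ (φ t : ℕ) < (φ z : ℕ)).card := by
    apply Finset.card_lt_card
    rw [Finset.ssubset_iff_of_subset
      (Finset.monotone_filter_right univ (fun a _ ha => ⟨ha.1, ha.2.trans h⟩))]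
    exact ⟨x, by simp only [Finset.mem_filter, Finset.mem_univ, true_and]; exact ⟨hx, h⟩, by simp⟩
  omega

lemma newPos_le_S [Fintype V] {φ : V ≃ Fin (Fintype.card V)} {S : Set V} {x z : V}
    (hx : x ∈ S) (hz : z ∈ S) (h : (φ x : ℕ) < (φ z : ℕ)) :
    newPos φ S x ≤ newPos φ S z + ((φ z : ℕ) - (φ x : ℕ)) := by
  simp only [newPos]; rw [if_pos hx, if_pos hz]
  have h1 := Finset.card_le_card_sdiff_add_card
    (s := univ.filter fun s : V => s ∈ S ∧ (φ x : ℕ) < (φ s : ℕ))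
    (t := univ.filter fun s : V => s ∈ S ∧ (φ z : ℕ) < (φ s : ℕ))
  have h2 : ((univ.filter fun s : V => s ∈ S ∧ (φ x : ℕ) < (φ s : ℕ)) \
      (univ.filter fun s : V => s ∈ S ∧ (φ z : ℕ) < (φ s : ℕ))).card
      ≤ (φ z : ℕ) - (φ x : ℕ) := by
    have := Finset.card_le_card_of_injOn (fun s : V => (φ s : ℕ))
      (s := (univ.filter fun s : V => s ∈ S ∧ (φ x : ℕ) < (φ s : ℕ)) \
        (univ.filter fun s : V => s ∈ S ∧ (φ z : ℕ) < (φ s : ℕ)))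
      (t := Finset.Ioc ((φ x : ℕ)) ((φ z : ℕ)))
      (by
        intro a ha
        simp only [Finset.mem_sdiff, Finset.mem_filter, Finset.mem_univ, true_and,
          not_and, Finset.mem_Ioc, Finset.mem_coe] at ha ⊢
        exact ⟨ha.1.2, by have := ha.2 ha.1.1; omega⟩)
      (fun a _ b _ hab => φ.injective (Fin.val_injective hab))
    rwa [Nat.card_Ioc] at this
  omega

lemma newPos_le_C [Fintype V] {φ : V ≃ Fin (Fintype.card V)} {S : Set V} {x z : V}
    (hx : x ∉ S) (hz : z ∉ S) (h : (φ x : ℕ) < (φ z : ℕ)) :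
    newPos φ S z ≤ newPos φ S x + ((φ z : ℕ) - (φ x : ℕ)) := by
  simp only [newPos]; rw [if_neg hx, if_neg hz]
  have h1 := Finset.card_le_card_sdiff_add_card
    (s := univ.filter fun t : V => t ∉ S ∧ (φ t : ℕ) < (φ z : ℕ))
    (t := univ.filter fun t : V => t ∉ S ∧ (φ t : ℕ) < (φ x : ℕ))
  have h2 : ((univ.filter fun t : V => t ∉ S ∧ (φ t : ℕ) < (φ z : ℕ)) \
      (univ.filter fun t : V => t ∉ S ∧ (φ t : ℕ) < (φ x : ℕ))).card
      ≤ (φ z : ℕ) - (φ x : ℕ) := by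
    have := Finset.card_le_card_of_injOn (fun s : V => (φ s : ℕ))
      (s := (univ.filter fun t : V => t ∉ S ∧ (φ t : ℕ) < (φ z : ℕ)) \
        (univ.filter fun t : V => t ∉ S ∧ (φ t : ℕ) < (φ x : ℕ)))
      (t := Finset.Ico ((φ x : ℕ)) ((φ z : ℕ)))
      (by
        intro a ha
        simp only [Finset.mem_sdiff, Finset.mem_filter, Finset.mem_univ, true_and,
          not_and, Finset.mem_Ico, Finset.mem_coe] at ha ⊢
        exact ⟨by have := ha.2 ha.1.1; omega, ha.1.2⟩)
      (fun a _ b _ hab => φ.injective (Fin.val_injective hab))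
    rwa [Nat.card_Ico] at this
  omega

lemma newPos_injective [Fintype V] (φ : V ≃ Fin (Fintype.card V)) (S : Set V) :
    Function.Injective (newPos φ S) := by
  intro x z hxz
  by_cases hx : x ∈ S <;> by_cases hz : z ∈ S
  · rcases Nat.lt_trichotomy ((φ x : ℕ)) ((φ z : ℕ)) with h | h | h
    · exact absurd hxz.symm (Nat.ne_of_lt (newPos_lt_of_mem_S hx hz h))
    · exact φ.injective (Fin.val_injective h)
    · exact absurd hxz (Nat.ne_of_lt (newPos_lt_of_mem_S hz hx h))
  · exact absurd hxz (Nat.ne_of_lt (lt_of_lt_of_le (newPos_lt_c1_of_mem hx)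
      (le_newPos_of_not_mem hz)))
  · exact absurd hxz.symm (Nat.ne_of_lt (lt_of_lt_of_le (newPos_lt_c1_of_mem hz)
      (le_newPos_of_not_mem hx)))
  · rcases Nat.lt_trichotomy ((φ x : ℕ)) ((φ z : ℕ)) with h | h | h
    · exact absurd hxz (Nat.ne_of_lt (newPos_lt_of_not_mem hx hz h))
    · exact φ.injective (Fin.val_injective h)
    · exact absurd hxz.symm (Nat.ne_of_lt (newPos_lt_of_not_mem hz hx h))

lemma card_filter_val_lt [Fintype V] (φ : V ≃ Fin (Fintype.card V)) (x : V) :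
    (univ.filter fun z : V => (φ z : ℕ) < (φ x : ℕ)).card = (φ x : ℕ) := by
  have : (univ.filter fun z : V => (φ z : ℕ) < (φ x : ℕ)).card
      = (Finset.Iio (φ x)).card := by
    apply Finset.card_bij (fun z _ => φ z)
    · intro a ha
      simp only [Finset.mem_filter, Finset.mem_univ, true_and] at ha
      rw [Finset.mem_Iio, Fin.lt_def]; exact ha
    · intro a _ b _ hab; exact φ.injective hab
    · intro b hb
      rw [Finset.mem_Iio, Fin.lt_def] at hb
      exact ⟨φ.symm b, by simpa using hb, by simp⟩
  rw [this, Fin.card_Iio]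

lemma front_is_leaf [Fintype V] (T : SimpleGraph V) (hT : T.IsTree) (hn : 2 ≤ Fintype.card V)
    (φ : V ≃ Fin (Fintype.card V)) (hφ : IsOLA T φ) (v : V) (hv : (φ v : ℕ) = 0) :
    T.degree v = 1 := by
  have hconn := hT.isConnected
  have hdegpos : 0 < T.degree v := by
    rw [SimpleGraph.degree_pos_iff_exists_adj]
    obtain ⟨z, hz⟩ := Fintype.exists_ne_of_one_lt_card (by omega) v
    obtain ⟨q⟩ := hconn.preconnected v z
    cases q with
    | nil => exact absurd rfl hz
    | cons hadj _ => exact ⟨_, hadj⟩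
  by_contra hne
  have hdeg2 : 1 < T.degree v := by omega
  obtain ⟨w₁, hw₁m, w₂, hw₂m, hw12⟩ := Finset.one_lt_card.mp hdeg2
  rw [SimpleGraph.mem_neighborFinset] at hw₁m hw₂m
  have h1lt : 1 < Fintype.card V := by omega
  set y := φ.symm ⟨1, h1lt⟩ with hydef
  have hy1 : (φ y : ℕ) = 1 := by rw [hydef]; simp
  have hyv : y ≠ v := by intro h; rw [h, hv] at hy1; omega
  have hnotboth : ¬ ((deleteVertex T v).Reachable y w₁ ∧ (deleteVertex T v).Reachable y w₂) := by
    rintro ⟨h1, h2⟩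
    exact no_two_connections hT hw₁m hw₂m hw12 (h1.symm.trans h2)
  obtain ⟨w', hvw', hyw'⟩ : ∃ w', T.Adj v w' ∧ ¬ (deleteVertex T v).Reachable y w' := by
    by_cases hc : (deleteVertex T v).Reachable y w₁
    · exact ⟨w₂, hw₂m, fun h => hnotboth ⟨hc, h⟩⟩
    · exact ⟨w₁, hw₁m, hc⟩
  obtain ⟨S, hSspec⟩ : ∃ S : Set V, ∀ x, x ∈ S ↔ (deleteVertex T v).Reachable x w' :=
    ⟨{x | (deleteVertex T v).Reachable x w'}, fun _ => Iff.rfl⟩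
  have hw'S : w' ∈ S := (hSspec w').mpr (SimpleGraph.Reachable.refl _)
  have hvS : v ∉ S := by
    intro hmem
    obtain ⟨q⟩ := (hSspec v).mp hmem
    exact hvw'.ne (vertex_mem_support_walk_deleteVertex q.reverse
      (SimpleGraph.Walk.end_mem_support _))
  have hyS : y ∉ S := fun h => hyw' ((hSspec y).mp h)
  have hcross : ∀ x z : V, T.Adj x z → x ∈ S → z ∉ S → z = v ∧ x = w' := by
    intro x z hadj hxS hzS
    have hzv : z = v := by
      by_contra hzv
      have hxv : x ≠ v := fun h => hvS (h ▸ hxS)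
      have hzx : (deleteVertex T v).Adj z x := (⟨hadj.symm, hzv, hxv⟩ : T.Adj z x ∧ z ≠ v ∧ x ≠ v)
      exact hzS ((hSspec z).mpr (hzx.reachable.trans ((hSspec x).mp hxS)))
    refine ⟨hzv, ?_⟩
    by_contra hxw
    exact no_two_connections hT (hzv ▸ hadj.symm) hvw' hxw ((hSspec x).mp hxS)
  have hwv : w' ≠ v := fun h => hvS (h ▸ hw'S)
  have hw'y : w' ≠ y := fun h => hyS (h ▸ hw'S)
  have hw'0 : (φ w' : ℕ) ≠ 0 :=
    fun h => hwv (φ.injective (Fin.val_injective (h.trans hv.symm)))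
  have hw'1 : (φ w' : ℕ) ≠ 1 :=
    fun h => hw'y (φ.injective (Fin.val_injective (h.trans hy1.symm)))
  -- counting facts
  have hfv : newPos φ S v = (univ.filter fun s : V => s ∈ S).card := by
    rw [newPos, if_neg hvS]
    have he : (univ.filter fun t : V => t ∉ S ∧ (φ t : ℕ) < (φ v : ℕ)) = ∅ := by
      apply Finset.filter_false_of_mem
      intro t _
      rw [hv]
      exact fun h => Nat.not_lt_zero _ h.2
    rw [he]; simp
  have hfw : newPos φ S w'
      + ((univ.filter fun s : V => s ∈ S ∧ (φ s : ℕ) < (φ w' : ℕ)).card + 1)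
      = (univ.filter fun s : V => s ∈ S).card := by
    rw [newPos, if_pos hw'S]
    have hsplit := Finset.card_filter_add_card_filter_not
      (s := univ.filter fun s : V => s ∈ S) (p := fun s => (φ w' : ℕ) < (φ s : ℕ))
    rw [Finset.filter_filter, Finset.filter_filter] at hsplit
    have h2 : (univ.filter fun s : V => s ∈ S ∧ ¬ (φ w' : ℕ) < (φ s : ℕ))
        = insert w' (univ.filter fun s : V => s ∈ S ∧ (φ s : ℕ) < (φ w' : ℕ)) := by
      ext s
      simp only [Finset.mem_filter, Finset.mem_univ, true_and, Finset.mem_insert, not_lt]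
      constructor
      · rintro ⟨hs, hle⟩
        rcases Nat.lt_or_ge ((φ s : ℕ)) ((φ w' : ℕ)) with h | h
        · exact Or.inr ⟨hs, h⟩
        · exact Or.inl (φ.injective (Fin.val_injective (le_antisymm hle h)))
      · rintro (rfl | ⟨hs, hlt⟩)
        · exact ⟨hw'S, le_refl _⟩
        · exact ⟨hs, le_of_lt hlt⟩
    rw [h2, Finset.card_insert_of_notMem (by simp)] at hsplit
    omega
  have hold : (φ w' : ℕ)
      = (univ.filter fun s : V => s ∈ S ∧ (φ s : ℕ) < (φ w' : ℕ)).card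
      + (univ.filter fun t : V => t ∉ S ∧ (φ t : ℕ) < (φ w' : ℕ)).card := by
    have h0 := card_filter_val_lt φ w'
    have hsplit := Finset.card_filter_add_card_filter_not
      (s := (univ : Finset V).filter fun z => (φ z : ℕ) < (φ w' : ℕ))
      (p := fun s => s ∈ S)
    rw [Finset.filter_filter, Finset.filter_filter] at hsplit
    have e1 : (univ.filter fun s : V => (φ s : ℕ) < (φ w' : ℕ) ∧ s ∈ S)
        = univ.filter fun s : V => s ∈ S ∧ (φ s : ℕ) < (φ w' : ℕ) := by
      ext s; simp [and_comm]
    have e2 : (univ.filter fun s : V => (φ s : ℕ) < (φ w' : ℕ) ∧ ¬ s ∈ S)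
        = univ.filter fun t : V => t ∉ S ∧ (φ t : ℕ) < (φ w' : ℕ) := by
      ext s; simp [and_comm]
    rw [e1, e2, h0] at hsplit
    omega
  have hnb2 : 2 ≤ (univ.filter fun t : V => t ∉ S ∧ (φ t : ℕ) < (φ w' : ℕ)).card := by
    have hsub : ({v, y} : Finset V)
        ⊆ univ.filter fun t : V => t ∉ S ∧ (φ t : ℕ) < (φ w' : ℕ) := by
      intro t ht
      rcases Finset.mem_insert.mp ht with rfl | ht
      · simp only [Finset.mem_filter, Finset.mem_univ, true_and]
        exact ⟨hvS, by omega⟩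
      · rw [Finset.mem_singleton] at ht
        subst ht
        simp only [Finset.mem_filter, Finset.mem_univ, true_and]
        exact ⟨hyS, by omega⟩
    have hcard := Finset.card_le_card hsub
    rwa [Finset.card_pair (fun h => hyv h.symm)] at hcard
  -- new layout
  have hbij : Function.Bijective
      (fun x => (⟨newPos φ S x, newPos_lt_card φ S x⟩ : Fin (Fintype.card V))) := by
    rw [Fintype.bijective_iff_injective_and_card]
    refine ⟨fun a b hab => newPos_injective φ S (congrArg Fin.val hab), by simp⟩
  set ψ : V ≃ Fin (Fintype.card V) := Equiv.ofBijective _ hbij with hψdef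
  have hψval : ∀ a : V, (ψ a : ℕ) = newPos φ S a := fun a => rfl
  have hcost : layoutCost T ψ < layoutCost T φ := by
    unfold layoutCost
    apply Finset.sum_lt_sum
    · intro e he
      revert he
      induction e using Sym2.ind with
      | _ x z =>
        intro he
        have hadj : T.Adj x z := by
          rwa [SimpleGraph.mem_edgeFinset, SimpleGraph.mem_edgeSet] at he
        simp only [Sym2.lift_mk]
        rw [hψval x, hψval z]
        by_cases hx : x ∈ S <;> by_cases hz : z ∈ S
        · rcases Nat.lt_trichotomy ((φ x : ℕ)) ((φ z : ℕ)) with h | h | h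
          · have h1 := newPos_lt_of_mem_S hx hz h
            have h2 := newPos_le_S hx hz h
            omega
          · have hxz : x = z := φ.injective (Fin.val_injective h)
            subst hxz; omega
          · have h1 := newPos_lt_of_mem_S hz hx h
            have h2 := newPos_le_S hz hx h
            omega
        · obtain ⟨h1, h2⟩ := hcross x z hadj hx hz
          subst h1; subst h2
          omega
        · obtain ⟨h1, h2⟩ := hcross z x hadj.symm hz hx
          subst h1; subst h2
          omega
        · rcases Nat.lt_trichotomy ((φ x : ℕ)) ((φ z : ℕ)) with h | h | h
          · have h1 := newPos_lt_of_not_mem hx hz h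
            have h2 := newPos_le_C hx hz h
            omega
          · have hxz : x = z := φ.injective (Fin.val_injective h)
            subst hxz; omega
          · have h1 := newPos_lt_of_not_mem hz hx h
            have h2 := newPos_le_C hz hx h
            omega
    · refine ⟨s(v, w'), ?_, ?_⟩
      · rw [SimpleGraph.mem_edgeFinset, SimpleGraph.mem_edgeSet]
        exact hvw'
      · simp only [Sym2.lift_mk]
        rw [hψval v, hψval w']
        omega
  exact absurd (hφ ψ) (not_le.mpr hcost)

lemma layoutCost_trans_revPerm [Fintype V] (G : SimpleGraph V)
    (χ : V ≃ Fin (Fintype.card V)) :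
    layoutCost G (χ.trans Fin.revPerm) = layoutCost G χ := by
  unfold layoutCost
  apply Finset.sum_congr rfl
  intro e _
  induction e using Sym2.ind with
  | _ x z =>
    simp only [Sym2.lift_mk, Equiv.trans_apply, Fin.revPerm_apply, Fin.val_rev]
    have h1 := (χ x).isLt
    have h2 := (χ z).isLt
    omega

/-- In any optimal linear arrangement of a tree on `n ≥ 2` vertices,
the vertices labeled `1` and `n` (here: labels `0` and `n-1`, zero-indexed) are leaves. -/
theorem extreme_vertices_of_tree_ola_are_leaves [Fintype V]
    (T : SimpleGraph V) (hT : T.IsTree) (hn : 2 ≤ Fintype.card V)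
    (φ : V ≃ Fin (Fintype.card V)) (hφ : IsOLA T φ) :
    ∀ v u : V, (φ v : ℕ) = 0 → (φ u : ℕ) = Fintype.card V - 1 →
      T.degree v = 1 ∧ T.degree u = 1 := by
  intro v u hv hu
  refine ⟨front_is_leaf T hT hn φ hφ v hv, ?_⟩
  have hrevOLA : IsOLA T (φ.trans Fin.revPerm) := by
    intro χ
    calc layoutCost T (φ.trans Fin.revPerm) = layoutCost T φ :=
          layoutCost_trans_revPerm T φ
      _ ≤ layoutCost T (χ.trans Fin.revPerm) := hφ _
      _ = layoutCost T χ := layoutCost_trans_revPerm T χ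
  have hu0 : ((φ.trans Fin.revPerm) u : ℕ) = 0 := by
    have := (φ u).isLt
    simp only [Equiv.trans_apply, Fin.revPerm_apply, Fin.val_rev]
    omega
  exact front_is_leaf T hT hn _ hrevOLA u hu0
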